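/- Let F be a finite field of characteristic 2 with q = |F|. Let W1 be the pencil of conics spanned by (X1+X2)^2 and X1·X2, and let W2 be the pencil spanned by X2^2 and X1·X2. Then (a1(W1), a2r(W1), a2i(W1), a3(W1)) = (1, q/2, q/2, 0) and (a1(W2), a2r(W2), a2i(W2), a3(W2)) = (1, q, 0, 0). In particular, W1 and W2 are not GL(3,F)-equivalent. -/

import Mathlib

noncomputable section

open MvPolynomial

namespace Pencils

/-- The space of ternary polynomials over `F`. -/
abbrev Poly (F : Type*) [Field F] : Type _ := MvPolynomial (Fin 3) F

variable {F : Type*} [Field F]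

/-- The coefficient of the monomial `X i * X j` in `f` (for `i = j`, of `X i ^ 2`). -/
def qc (f : Poly F) (i j : Fin 3) : F :=
  MvPolynomial.coeff (Finsupp.single i 1 + Finsupp.single j 1) f

/-- A quadratic form over a field of characteristic 2 is singular iff
`a00·a12² + a11·a02² + a22·a01² + a01·a02·a12 = 0`. -/
def IsSingular (f : Poly F) : Prop :=
  qc f 0 0 * qc f 1 2 ^ 2 + qc f 1 1 * qc f 0 2 ^ 2 + qc f 2 2 * qc f 0 1 ^ 2 +
    qc f 0 1 * qc f 0 2 * qc f 1 2 = 0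

/-- A pencil of conics: a 2-dimensional subspace of the space of
homogeneous quadratic forms in `X 0, X 1, X 2`. -/
def IsPencil (W : Submodule F (Poly F)) : Prop :=
  W ≤ homogeneousSubmodule (Fin 3) F 2 ∧ Module.finrank F ↥W = 2

/-- A member of a pencil `W` is a 1-dimensional subspace of `W`. -/
def IsMember (W L : Submodule F (Poly F)) : Prop :=
  L ≤ W ∧ Module.finrank F ↥L = 1

/-- A double line: all nonzero elements are squares of nonzero linear forms. -/
def IsDoubleLine (L : Submodule F (Poly F)) : Prop :=
  ∀ f ∈ L, f ≠ 0 → ∃ ℓ : Poly F, ℓ.IsHomogeneous 1 ∧ ℓ ≠ 0 ∧ f = ℓ ^ 2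

/-- A real line pair: all nonzero elements are products of two linearly
independent linear forms over `F`. -/
def IsRealPair (L : Submodule F (Poly F)) : Prop :=
  ∀ f ∈ L, f ≠ 0 → ∃ ℓ m : Poly F, ℓ.IsHomogeneous 1 ∧ m.IsHomogeneous 1 ∧
    LinearIndependent F ![ℓ, m] ∧ f = ℓ * m

/-- `f` has a nonzero linear form over `F` as a factor. -/
def HasLinearFactor (f : Poly F) : Prop :=
  ∃ ℓ : Poly F, ℓ.IsHomogeneous 1 ∧ ℓ ≠ 0 ∧ ℓ ∣ f

/-- An imaginary line pair: all nonzero elements are singular with no linear factor over `F`. -/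
def IsImagPair (L : Submodule F (Poly F)) : Prop :=
  ∀ f ∈ L, f ≠ 0 → IsSingular f ∧ ¬ HasLinearFactor f

/-- A nonsingular member: all nonzero elements are nonsingular. -/
def IsNonsingularConic (L : Submodule F (Poly F)) : Prop :=
  ∀ f ∈ L, f ≠ 0 → ¬ IsSingular f

/-- `a1 W`: number of members of `W` that are double lines. -/
def a1 (W : Submodule F (Poly F)) : ℕ :=
  Nat.card {L : Submodule F (Poly F) // IsMember W L ∧ IsDoubleLine L}

/-- `a2r W`: number of members of `W` that are real line pairs. -/
def a2r (W : Submodule F (Poly F)) : ℕ :=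
  Nat.card {L : Submodule F (Poly F) // IsMember W L ∧ IsRealPair L}

/-- `a2i W`: number of members of `W` that are imaginary line pairs. -/
def a2i (W : Submodule F (Poly F)) : ℕ :=
  Nat.card {L : Submodule F (Poly F) // IsMember W L ∧ IsImagPair L}

/-- `a3 W`: number of members of `W` that are nonsingular conics. -/
def a3 (W : Submodule F (Poly F)) : ℕ :=
  Nat.card {L : Submodule F (Poly F) // IsMember W L ∧ IsNonsingularConic L}

/-- A base point of the pencil `W`: a 1-dimensional subspace of `F³` on which
every element of `W` vanishes. -/
def IsBasePoint (W : Submodule F (Poly F)) (P : Submodule F (Fin 3 → F)) : Prop :=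
  Module.finrank F ↥P = 1 ∧ ∀ f ∈ W, ∀ v ∈ P, MvPolynomial.eval v f = 0

/-- `b W`: the number of base points of `W`. -/
def b (W : Submodule F (Poly F)) : ℕ :=
  Nat.card {P : Submodule F (Fin 3 → F) // IsBasePoint W P}

/-- The substitution action of a matrix `g` on quadratic forms: `(g • f)(X) = f(g·X)`. -/
def act (g : Matrix (Fin 3) (Fin 3) F) : Poly F →ₗ[F] Poly F :=
  (MvPolynomial.aeval (fun i => ∑ j : Fin 3, MvPolynomial.C (g i j) * MvPolynomial.X j) :
    Poly F →ₐ[F] Poly F).toLinearMap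


section AUX
set_option linter.unusedSectionVars false

lemma fin3supp_eq_iff (d e : Fin 3 →₀ ℕ) : d = e ↔ d 0 = e 0 ∧ d 1 = e 1 ∧ d 2 = e 2 := by
  constructor
  · rintro rfl; exact ⟨rfl, rfl, rfl⟩
  · rintro ⟨h0, h1, h2⟩; ext i; fin_cases i <;> assumption

lemma degree3 (d : Fin 3 →₀ ℕ) : d.degree = d 0 + d 1 + d 2 := by
  rw [Finsupp.degree_apply, Finset.sum_subset (Finset.subset_univ d.support)
    (fun i _ hi => Finsupp.notMem_support_iff.mp hi), Fin.sum_univ_three]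

lemma X_mul_X (i j : Fin 3) : (X i * X j : Poly F) =
    monomial (Finsupp.single i 1 + Finsupp.single j 1) 1 := by
  rw [X, X, monomial_mul, one_mul]

lemma X_sq (i : Fin 3) : (X i ^ 2 : Poly F) = monomial (Finsupp.single i 2) 1 := by
  rw [X_pow_eq_monomial]

/-- linear form -/
def lin (a0 a1 a2 : F) : Poly F := C a0 * X 0 + C a1 * X 1 + C a2 * X 2

/-- normal form of a quadratic -/
def NF (c00 c01 c02 c11 c12 c22 : F) : Poly F :=
  C c00 * X 0 ^ 2 + C c01 * (X 0 * X 1) + C c02 * (X 0 * X 2) + C c11 * X 1 ^ 2 +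
    C c12 * (X 1 * X 2) + C c22 * X 2 ^ 2

lemma lin_isHomogeneous (a0 a1 a2 : F) : (lin a0 a1 a2).IsHomogeneous 1 :=
  ((isHomogeneous_C_mul_X _ _).add (isHomogeneous_C_mul_X _ _)).add (isHomogeneous_C_mul_X _ _)

lemma linear_rep (ℓ : Poly F) (h : ℓ.IsHomogeneous 1) :
    ℓ = lin (coeff (Finsupp.single 0 1) ℓ) (coeff (Finsupp.single 1 1) ℓ)
      (coeff (Finsupp.single 2 1) ℓ) := by
  ext d
  by_cases hd : d.degree = 1
  · have h3 : d 0 + d 1 + d 2 = 1 := by rw [← degree3, hd]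
    have : d = Finsupp.single 0 1 ∨ d = Finsupp.single 1 1 ∨ d = Finsupp.single 2 1 := by
      rcases Nat.eq_zero_or_pos (d 0) with h0 | h0
      · rcases Nat.eq_zero_or_pos (d 1) with h1 | h1
        · right; right; rw [fin3supp_eq_iff]; simp [Finsupp.single_apply]; omega
        · right; left; rw [fin3supp_eq_iff]; simp [Finsupp.single_apply]; omega
      · left; rw [fin3supp_eq_iff]; simp [Finsupp.single_apply]; omega
    rcases this with rfl | rfl | rfl <;>
      simp [lin, coeff_add, coeff_C_mul, coeff_X', fin3supp_eq_iff, Finsupp.single_apply]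
  · rw [h.coeff_eq_zero (by simpa using hd),
      (lin_isHomogeneous _ _ _).coeff_eq_zero (by simpa using hd)]

lemma mul_lin (a0 a1 a2 b0 b1 b2 : F) : lin a0 a1 a2 * lin b0 b1 b2 =
    NF (a0 * b0) (a0 * b1 + a1 * b0) (a0 * b2 + a2 * b0) (a1 * b1) (a1 * b2 + a2 * b1)
      (a2 * b2) := by
  simp only [lin, NF, map_add, map_mul]; ring

-- canonical exponents
def E (i j : Fin 3) : Fin 3 →₀ ℕ := Finsupp.single i 1 + Finsupp.single j 1

lemma qc_eq (f : Poly F) (i j : Fin 3) : qc f i j = coeff (E i j) f := rfl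

@[simp] lemma coeff_NF_00 (c00 c01 c02 c11 c12 c22 : F) :
    coeff (E 0 0) (NF c00 c01 c02 c11 c12 c22) = c00 := by
  simp [NF, E, coeff_add, coeff_C_mul, X_mul_X, X_sq, coeff_monomial, fin3supp_eq_iff,
    Finsupp.single_apply, Finsupp.add_apply]
@[simp] lemma coeff_NF_01 (c00 c01 c02 c11 c12 c22 : F) :
    coeff (E 0 1) (NF c00 c01 c02 c11 c12 c22) = c01 := by
  simp [NF, E, coeff_add, coeff_C_mul, X_mul_X, X_sq, coeff_monomial, fin3supp_eq_iff,
    Finsupp.single_apply, Finsupp.add_apply]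
@[simp] lemma coeff_NF_02 (c00 c01 c02 c11 c12 c22 : F) :
    coeff (E 0 2) (NF c00 c01 c02 c11 c12 c22) = c02 := by
  simp [NF, E, coeff_add, coeff_C_mul, X_mul_X, X_sq, coeff_monomial, fin3supp_eq_iff,
    Finsupp.single_apply, Finsupp.add_apply]
@[simp] lemma coeff_NF_11 (c00 c01 c02 c11 c12 c22 : F) :
    coeff (E 1 1) (NF c00 c01 c02 c11 c12 c22) = c11 := by
  simp [NF, E, coeff_add, coeff_C_mul, X_mul_X, X_sq, coeff_monomial, fin3supp_eq_iff,
    Finsupp.single_apply, Finsupp.add_apply]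
@[simp] lemma coeff_NF_12 (c00 c01 c02 c11 c12 c22 : F) :
    coeff (E 1 2) (NF c00 c01 c02 c11 c12 c22) = c12 := by
  simp [NF, E, coeff_add, coeff_C_mul, X_mul_X, X_sq, coeff_monomial, fin3supp_eq_iff,
    Finsupp.single_apply, Finsupp.add_apply]
@[simp] lemma coeff_NF_22 (c00 c01 c02 c11 c12 c22 : F) :
    coeff (E 2 2) (NF c00 c01 c02 c11 c12 c22) = c22 := by
  simp [NF, E, coeff_add, coeff_C_mul, X_mul_X, X_sq, coeff_monomial, fin3supp_eq_iff,
    Finsupp.single_apply, Finsupp.add_apply]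

@[simp] lemma coeff_lin_1 (a0 a1 a2 : F) : coeff (Finsupp.single 1 1) (lin a0 a1 a2) = a1 := by
  simp [lin, coeff_add, coeff_C_mul, coeff_X', fin3supp_eq_iff, Finsupp.single_apply]
@[simp] lemma coeff_lin_2 (a0 a1 a2 : F) : coeff (Finsupp.single 2 1) (lin a0 a1 a2) = a2 := by
  simp [lin, coeff_add, coeff_C_mul, coeff_X', fin3supp_eq_iff, Finsupp.single_apply]
@[simp] lemma coeff_lin_0 (a0 a1 a2 : F) : coeff (Finsupp.single 0 1) (lin a0 a1 a2) = a0 := by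
  simp [lin, coeff_add, coeff_C_mul, coeff_X', fin3supp_eq_iff, Finsupp.single_apply]

section Char2
variable [CharP F 2]

lemma two_zero : (2 : F) = 0 := CharTwo.two_eq_zero

/-- the generators -/
def PInf : Poly F := X 1 * X 2
def g1 (b : F) : Poly F := X 1 ^ 2 + X 2 ^ 2 + C b * (X 1 * X 2)
def g2 (b : F) : Poly F := X 2 ^ 2 + C b * (X 1 * X 2)

lemma sq_expand : ((X 1 + X 2 : Poly F)) ^ 2 = X 1 ^ 2 + X 2 ^ 2 := by
  have h2 : (C (2:F) : Poly F) = 0 := by rw [two_zero, map_zero]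
  have : ((X 1 + X 2 : Poly F)) ^ 2 = X 1 ^ 2 + X 2 ^ 2 + C 2 * (X 1 * X 2) := by
    rw [map_ofNat]; ring
  rw [this, h2, zero_mul, add_zero]

lemma PInf_nf : (PInf : Poly F) = NF 0 0 0 0 1 0 := by
  simp only [PInf, NF, map_zero, map_one]; ring
lemma g1_nf (b : F) : (g1 b : Poly F) = NF 0 0 0 1 b 1 := by
  simp only [g1, NF, map_zero, map_one]; ring
lemma g2_nf (b : F) : (g2 b : Poly F) = NF 0 0 0 0 b 1 := by
  simp only [g2, NF, map_zero, map_one]; ring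

lemma smul_NF (c c00 c01 c02 c11 c12 c22 : F) :
    c • NF c00 c01 c02 c11 c12 c22 = NF (c*c00) (c*c01) (c*c02) (c*c11) (c*c12) (c*c22) := by
  simp only [NF, smul_eq_C_mul, map_mul]; ring

lemma g1_ne_zero (b : F) : (g1 b : Poly F) ≠ 0 := fun h => by
  have := congrArg (coeff (E 1 1)) h
  rw [g1_nf] at this; simp at this
lemma g2_ne_zero (b : F) : (g2 b : Poly F) ≠ 0 := fun h => by
  have := congrArg (coeff (E 2 2)) h
  rw [g2_nf] at this; simp at this
lemma PInf_ne_zero : (PInf : Poly F) ≠ 0 := fun h => by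
  have := congrArg (coeff (E 1 2)) h
  rw [PInf_nf] at this; simp at this

/-- members of the pencil spanned by A and PInf -/
def mem' (A : Poly F) : Option F → Submodule F (Poly F)
  | none => Submodule.span F {PInf}
  | some b => Submodule.span F {A + C b * PInf}

lemma isMember_span_iff {W : Submodule F (Poly F)} {f : Poly F} (hf : f ≠ 0) :
    IsMember W (Submodule.span F {f}) ↔ f ∈ W := by
  constructor
  · intro h; exact h.1 (Submodule.subset_span rfl)
  · intro h
    exact ⟨Submodule.span_le.2 (Set.singleton_subset_iff.2 h), finrank_span_singleton hf⟩

set_option synthInstance.maxHeartbeats 1000000 in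
lemma isMember_iff {W L : Submodule F (Poly F)} :
    IsMember W L ↔ ∃ f : Poly F, f ≠ 0 ∧ f ∈ W ∧ L = Submodule.span F {f} := by
  constructor
  · rintro ⟨hle, hrk⟩
    obtain ⟨v, hv0, hv⟩ := finrank_eq_one_iff'.mp hrk
    refine ⟨v, by simpa using hv0, hle v.2, le_antisymm ?_ ?_⟩
    · intro w hw
      obtain ⟨c, hc⟩ := hv ⟨w, hw⟩
      have : c • (v : Poly F) = w := congrArg Subtype.val hc
      rw [← this]
      exact Submodule.smul_mem _ _ (Submodule.subset_span rfl)
    · rw [Submodule.span_le, Set.singleton_subset_iff]; exact v.2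
  · rintro ⟨f, hf0, hfW, rfl⟩
    exact (isMember_span_iff hf0).2 hfW

@[simp] lemma coeff_PInf_12 : coeff (E 1 2) (PInf : Poly F) = 1 := by rw [PInf_nf]; simp

section Param
variable {A : Poly F} {eA : Fin 3 →₀ ℕ} (hA : coeff eA A = 1) (hA12 : coeff (E 1 2) A = 0)
  (hP : coeff eA (PInf : Poly F) = 0)

include hA hP in
lemma gA_ne_zero (b : F) : A + C b * PInf ≠ 0 := fun h => by
  have := congrArg (coeff eA) h
  simp [coeff_add, coeff_C_mul, hA, hP] at this

include hA hA12 hP in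
lemma mem'_injective : Function.Injective (mem' A (F := F)) := by
  have key : ∀ b b' : F, A + C b' * PInf ∈ Submodule.span F {A + C b * PInf} → b' = b := by
    intro b b' hmem
    obtain ⟨c, hc⟩ := Submodule.mem_span_singleton.1 hmem
    have h1 := congrArg (coeff eA) hc
    have h2 := congrArg (coeff (E 1 2)) hc
    simp [coeff_smul, coeff_add, coeff_C_mul, hA, hP, hA12, smul_eq_mul] at h1 h2
    rw [h1, one_mul] at h2; exact h2.symm
  have key2 : ∀ b : F, ¬ ((PInf : Poly F) ∈ Submodule.span F {A + C b * PInf}) := by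
    intro b hmem
    obtain ⟨c, hc⟩ := Submodule.mem_span_singleton.1 hmem
    have h1 := congrArg (coeff eA) hc
    simp [coeff_smul, coeff_add, coeff_C_mul, hA, hP, smul_eq_mul] at h1
    rw [h1, zero_smul] at hc
    exact PInf_ne_zero hc.symm
  intro x y hxy
  match x, y with
  | none, none => rfl
  | some b, some b' =>
    simp only [mem'] at hxy
    have : A + C b' * PInf ∈ Submodule.span F {A + C b * PInf} := by
      rw [hxy]; exact Submodule.subset_span rfl
    rw [key b b' this]
  | none, some b =>
    simp only [mem'] at hxy
    exact absurd (hxy ▸ Submodule.subset_span rfl) (key2 b)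
  | some b, none =>
    simp only [mem'] at hxy
    exact absurd (hxy ▸ Submodule.subset_span rfl) (key2 b)

include hA hP in
lemma mem'_isMember (x : Option F) :
    IsMember (Submodule.span F {A, PInf}) (mem' A x) := by
  match x with
  | none =>
    rw [mem', isMember_span_iff PInf_ne_zero]
    exact Submodule.subset_span (by simp)
  | some b =>
    rw [mem', isMember_span_iff (gA_ne_zero hA hP b)]
    exact Submodule.mem_span_pair.2 ⟨1, b, by rw [one_smul, smul_eq_C_mul]⟩

include hA hP in
lemma isMember_param {L : Submodule F (Poly F)}
    (hL : IsMember (Submodule.span F {A, PInf}) L) : ∃ x, L = mem' A x := by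
  obtain ⟨f, hf0, hfW, rfl⟩ := isMember_iff.1 hL
  obtain ⟨a, c, hac⟩ := Submodule.mem_span_pair.1 hfW
  by_cases ha : a = 0
  · refine ⟨none, ?_⟩
    have hc : c ≠ 0 := by rintro rfl; simp [ha] at hac; exact hf0 hac.symm
    rw [mem', ← hac, ha, zero_smul, zero_add, Submodule.span_singleton_smul_eq (hc.isUnit) _]
  · refine ⟨some (c / a), ?_⟩
    have h' : a • (C (c / a) * PInf : Poly F) = c • PInf := by
      rw [smul_eq_C_mul, smul_eq_C_mul, ← mul_assoc, ← map_mul, mul_div_cancel₀ _ ha]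
    have : f = a • (A + C (c / a) * PInf) := by
      rw [smul_add, h', hac]
    rw [mem', this, Submodule.span_singleton_smul_eq (Ne.isUnit ha) _]

end Param

-- ### D1 helpers

lemma mem_span_gen {g f : Poly F} (hf : f ∈ Submodule.span F {g}) (hf0 : f ≠ 0) :
    ∃ c : F, c ≠ 0 ∧ f = c • g := by
  obtain ⟨c, hc⟩ := Submodule.mem_span_singleton.1 hf
  refine ⟨c, fun h => ?_, hc.symm⟩
  rw [h, zero_smul] at hc; exact hf0 hc.symm

lemma exists_sqrt [Fintype F] (c : F) : ∃ d : F, d * d = c := by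
  have hinj : Function.Injective (fun x : F => x * x) := by
    intro x y h
    simp only at h
    have h0 : (x + y) * (x + y) = 0 := by linear_combination h + (x * y + y * y) * (two_zero (F := F))
    have := mul_self_eq_zero.1 h0
    linear_combination this - y * (two_zero (F := F))
  obtain ⟨d, hd⟩ := Finite.surjective_of_injective hinj c
  exact ⟨d, hd⟩

lemma smul_lin (d a0 a1 a2 : F) : d • lin a0 a1 a2 = lin (d*a0) (d*a1) (d*a2) := by
  simp only [lin, smul_eq_C_mul, map_mul]; ring

lemma lin_ne_zero' {a0 a1 a2 : F} (h : a1 ≠ 0 ∨ a2 ≠ 0) : lin a0 a1 a2 ≠ (0 : Poly F) := by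
  intro h0
  rcases h with h | h
  · exact h (by simpa using congrArg (coeff (Finsupp.single 1 1)) h0)
  · exact h (by simpa using congrArg (coeff (Finsupp.single 2 1)) h0)

lemma pair_indep {p q : Poly F} {c1 c2 d1 d2 : F}
    (hp1 : coeff (Finsupp.single 1 1) p = c1) (hp2 : coeff (Finsupp.single 2 1) p = c2)
    (hq1 : coeff (Finsupp.single 1 1) q = d1) (hq2 : coeff (Finsupp.single 2 1) q = d2)
    (hdet : c1 * d2 - c2 * d1 ≠ 0) : LinearIndependent F ![p, q] := by
  rw [LinearIndependent.pair_iff]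
  intro s t hst
  have e1 : s * c1 + t * d1 = 0 := by
    simpa [coeff_add, coeff_smul, smul_eq_mul, hp1, hq1] using
      congrArg (coeff (Finsupp.single 1 1)) hst
  have e2 : s * c2 + t * d2 = 0 := by
    simpa [coeff_add, coeff_smul, smul_eq_mul, hp2, hq2] using
      congrArg (coeff (Finsupp.single 2 1)) hst
  constructor
  · have : s * (c1 * d2 - c2 * d1) = 0 := by linear_combination d2 * e1 - d1 * e2
    exact (mul_eq_zero.1 this).resolve_right hdet
  · have : t * (c1 * d2 - c2 * d1) = 0 := by linear_combination -c2 * e1 + c1 * e2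
    exact (mul_eq_zero.1 this).resolve_right hdet

lemma isSingular_NF (x y z : F) : IsSingular (NF 0 0 0 x y z : Poly F) := by
  unfold IsSingular
  have h00 : qc (NF 0 0 0 x y z : Poly F) 0 0 = 0 := coeff_NF_00 _ _ _ _ _ _
  have h01 : qc (NF 0 0 0 x y z : Poly F) 0 1 = 0 := coeff_NF_01 _ _ _ _ _ _
  have h02 : qc (NF 0 0 0 x y z : Poly F) 0 2 = 0 := coeff_NF_02 _ _ _ _ _ _
  rw [h00, h01, h02]; ring

lemma sq_coeff12 (ℓ : Poly F) (h : ℓ.IsHomogeneous 1) : coeff (E 1 2) (ℓ ^ 2) = 0 := by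
  rw [linear_rep ℓ h, sq, mul_lin, coeff_NF_12]
  linear_combination (coeff (Finsupp.single 1 1) ℓ * coeff (Finsupp.single 2 1) ℓ) *
    (two_zero (F := F))

lemma not_isDoubleLine {g : Poly F} (h12 : coeff (E 1 2) g ≠ 0) :
    ¬ IsDoubleLine (Submodule.span F {g}) := by
  intro hDL
  have hg0 : g ≠ 0 := fun h => h12 (by rw [h]; simp)
  obtain ⟨ℓ, hℓ, -, hsq⟩ := hDL g (Submodule.subset_span rfl) hg0
  rw [hsq, sq_coeff12 ℓ hℓ] at h12
  exact h12 rfl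

lemma not_isNonsingular {g : Poly F} (hg : g ≠ 0) (hs : IsSingular g) :
    ¬ IsNonsingularConic (Submodule.span F {g}) := fun h =>
  h g (Submodule.subset_span rfl) hg hs

lemma not_isImagPair {g : Poly F} (hg : g ≠ 0) (hfac : HasLinearFactor g) :
    ¬ IsImagPair (Submodule.span F {g}) := fun h =>
  (h g (Submodule.subset_span rfl) hg).2 hfac

-- ### D2 positive classification

lemma NF_eq {a b c d e f a' b' c' d' e' f' : F} (h1 : a = a') (h2 : b = b') (h3 : c = c')
    (h4 : d = d') (h5 : e = e') (h6 : f = f') :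
    NF a b c d e f = NF a' b' c' d' e' f' := by rw [h1, h2, h3, h4, h5, h6]

def A1 : Poly F := X 1 ^ 2 + X 2 ^ 2
def A2 : Poly F := X 2 ^ 2

lemma isDoubleLine_sq [Fintype F] {n g : Poly F} (hn : n.IsHomogeneous 1) (hn0 : n ≠ 0)
    (hg : g = n ^ 2) : IsDoubleLine (Submodule.span F {g}) := by
  intro f hf hf0
  obtain ⟨c, hc, rfl⟩ := mem_span_gen hf hf0
  obtain ⟨d, hd⟩ := exists_sqrt c
  have hd0 : d ≠ 0 := by rintro rfl; rw [zero_mul] at hd; exact hc hd.symm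
  refine ⟨C d * n, hn.C_mul d, mul_ne_zero (fun h => hd0 (by simpa using congrArg (coeff 0) h))
    hn0, ?_⟩
  rw [hg, mul_pow, ← map_pow, show d ^ 2 = c by rw [pow_two, hd], smul_eq_C_mul]

lemma isDoubleLine_g1_0 [Fintype F] : IsDoubleLine (Submodule.span F {A1 + C (0:F) * PInf}) := by
  refine isDoubleLine_sq ((isHomogeneous_X F 1).add (isHomogeneous_X F 2))
    (g := A1 + C (0:F) * PInf) ?_ ?_
  · have : (X 1 + X 2 : Poly F) = lin 0 1 1 := by simp [lin]
    rw [this]; exact lin_ne_zero' (Or.inl one_ne_zero)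
  · rw [map_zero, zero_mul, add_zero, sq_expand]; rfl

lemma isDoubleLine_g2_0 [Fintype F] : IsDoubleLine (Submodule.span F {A2 + C (0:F) * PInf}) := by
  refine isDoubleLine_sq (isHomogeneous_X F 2) (g := A2 + C (0:F) * PInf) ?_ ?_
  · have : (X 2 : Poly F) = lin 0 0 1 := by simp [lin]
    rw [this]; exact lin_ne_zero' (Or.inr one_ne_zero)
  · rw [map_zero, zero_mul, add_zero]; rfl

lemma isRealPair_span {g : Poly F}
    (H : ∀ c : F, c ≠ 0 → ∃ ℓ m : Poly F, ℓ.IsHomogeneous 1 ∧ m.IsHomogeneous 1 ∧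
      LinearIndependent F ![ℓ, m] ∧ c • g = ℓ * m) :
    IsRealPair (Submodule.span F {g}) := by
  intro f hf hf0
  obtain ⟨c, hc, rfl⟩ := mem_span_gen hf hf0
  obtain ⟨ℓ, m, h1, h2, h3, h4⟩ := H c hc
  exact ⟨ℓ, m, h1, h2, h3, h4⟩

lemma isRealPair_PInf : IsRealPair (Submodule.span F {(PInf : Poly F)}) := by
  refine isRealPair_span fun c hc => ⟨lin 0 c 0, lin 0 0 1, lin_isHomogeneous _ _ _,
    lin_isHomogeneous _ _ _, ?_, ?_⟩
  · exact pair_indep (coeff_lin_1 _ _ _) (coeff_lin_2 _ _ _) (coeff_lin_1 _ _ _)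
      (coeff_lin_2 _ _ _) (by simpa using hc)
  · rw [PInf_nf, smul_NF, mul_lin]; exact NF_eq (by ring) (by ring) (by ring) (by ring)
      (by ring) (by ring)

lemma isRealPair_g1 {b : F} (hb : b ≠ 0) {t : F} (ht : t * t + b * t + 1 = 0) :
    IsRealPair (Submodule.span F {A1 + C b * PInf}) := by
  have hgen : (A1 + C b * PInf : Poly F) = g1 b := rfl
  rw [hgen]
  refine isRealPair_span fun c hc => ⟨lin 0 c (c*t), lin 0 1 (t+b), lin_isHomogeneous _ _ _,
    lin_isHomogeneous _ _ _, ?_, ?_⟩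
  · refine pair_indep (coeff_lin_1 _ _ _) (coeff_lin_2 _ _ _) (coeff_lin_1 _ _ _)
      (coeff_lin_2 _ _ _) ?_
    have : c * (t + b) - (c * t) * 1 = c * b := by ring
    rw [this]; exact mul_ne_zero hc hb
  · rw [g1_nf, smul_NF, mul_lin]
    refine NF_eq (by ring) (by ring) (by ring) (by ring) ?_ ?_
    · linear_combination (-(c*t)) * (two_zero (F := F))
    · linear_combination (-c) * ht + c * (two_zero (F := F))

lemma isRealPair_g2 {b : F} (hb : b ≠ 0) :
    IsRealPair (Submodule.span F {A2 + C b * PInf}) := by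
  have hgen : (A2 + C b * PInf : Poly F) = g2 b := rfl
  rw [hgen]
  refine isRealPair_span fun c hc => ⟨lin 0 0 c, lin 0 b 1, lin_isHomogeneous _ _ _,
    lin_isHomogeneous _ _ _, ?_, ?_⟩
  · refine pair_indep (coeff_lin_1 _ _ _) (coeff_lin_2 _ _ _) (coeff_lin_1 _ _ _)
      (coeff_lin_2 _ _ _) ?_
    have : (0:F) * 1 - c * b = -(c*b) := by ring
    rw [this]; exact neg_ne_zero.2 (mul_ne_zero hc hb)
  · rw [g2_nf, smul_NF, mul_lin]
    exact NF_eq (by ring) (by ring) (by ring) (by ring) (by ring) (by ring)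

lemma hasLinFac_PInf : HasLinearFactor (PInf : Poly F) := by
  refine ⟨lin 0 1 0, lin_isHomogeneous _ _ _, lin_ne_zero' (Or.inl one_ne_zero),
    ⟨lin 0 0 1, ?_⟩⟩
  rw [PInf_nf, mul_lin]
  exact NF_eq (by ring) (by ring) (by ring) (by ring) (by ring) (by ring)

lemma hasLinFac_g1 {b t : F} (ht : t * t + b * t + 1 = 0) : HasLinearFactor (g1 b : Poly F) := by
  refine ⟨lin 0 1 t, lin_isHomogeneous _ _ _, lin_ne_zero' (Or.inl one_ne_zero),
    ⟨lin 0 1 (t+b), ?_⟩⟩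
  rw [g1_nf, mul_lin]
  refine NF_eq (by ring) (by ring) (by ring) (by ring) ?_ ?_
  · linear_combination (-t) * (two_zero (F := F))
  · linear_combination (-1 : F) * ht + (two_zero (F := F))

lemma hasLinFac_g2 (b : F) : HasLinearFactor (g2 b : Poly F) := by
  refine ⟨lin 0 0 1, lin_isHomogeneous _ _ _, lin_ne_zero' (Or.inr one_ne_zero),
    ⟨lin 0 b 1, ?_⟩⟩
  rw [g2_nf, mul_lin]
  exact NF_eq (by ring) (by ring) (by ring) (by ring) (by ring) (by ring)

lemma red_zero : (1:F) * 1 + 0 * 1 + 1 = 0 := by linear_combination (two_zero (F := F))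

-- ### D3 imaginary pairs and negative real-pair results

lemma noLinFac {b : F} (hirr : ∀ t : F, t * t + b * t + 1 ≠ 0) {c : F} (hc : c ≠ 0) :
    ¬ HasLinearFactor (c • g1 b) := by
  rintro ⟨ℓ, hℓ, hℓ0, k, hk⟩
  have hrep : ℓ = lin (coeff (Finsupp.single 0 1) ℓ) (coeff (Finsupp.single 1 1) ℓ)
      (coeff (Finsupp.single 2 1) ℓ) := linear_rep ℓ hℓ
  set a0 := coeff (Finsupp.single 0 1) ℓ
  set a1 := coeff (Finsupp.single 1 1) ℓ
  set a2 := coeff (Finsupp.single 2 1) ℓ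
  by_cases h1 : a1 = 0 ∧ a2 = 0
  · have hv : eval ![(0:F), 1, 0] (c • g1 b) = c := by
      simp [g1, smul_eq_C_mul]
    rw [hk, map_mul] at hv
    have hvl : eval ![(0:F), 1, 0] ℓ = 0 := by
      rw [hrep]; simp [lin, h1.1]
    rw [hvl, zero_mul] at hv
    exact hc hv.symm
  · have hvl : eval ![(0:F), a2, a1] ℓ = 0 := by
      rw [hrep]
      simp only [lin, map_add, map_mul, eval_C, eval_X]
      simp only [Matrix.cons_val_zero, Matrix.cons_val_one, Matrix.head_cons]
      have : ![(0:F), a2, a1] 2 = a1 := rfl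
      rw [this]
      linear_combination (a1 * a2) * (two_zero (F := F))
    have hv : eval ![(0:F), a2, a1] (c • g1 b) = c * (a2^2 + a1^2 + b * (a2 * a1)) := by
      simp [g1, smul_eq_C_mul]; ring
    rw [hk, map_mul, hvl, zero_mul] at hv
    have hz : a2 ^ 2 + a1 ^ 2 + b * (a2 * a1) = 0 := by
      rcases mul_eq_zero.1 hv.symm with h | h
      · exact absurd h hc
      · exact h
    by_cases ha1 : a1 = 0
    · have ha2 : a2 ≠ 0 := fun h2 => h1 ⟨ha1, h2⟩
      apply ha2
      have : a2 ^ 2 = 0 := by rw [ha1] at hz; linear_combination hz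
      exact pow_eq_zero_iff (n := 2) (by norm_num) |>.1 this
    · refine hirr (a2 / a1) ?_
      have h2 : (a2 / a1) * (a2 / a1) + b * (a2 / a1) + 1
          = (a2 ^ 2 + a1 ^ 2 + b * (a2 * a1)) / a1 ^ 2 := by
        field_simp
        ring
      rw [h2, hz, zero_div]

lemma isImagPair_g1 {b : F} (hirr : ∀ t : F, t * t + b * t + 1 ≠ 0) :
    IsImagPair (Submodule.span F {A1 + C b * PInf}) := by
  have hgen : (A1 + C b * PInf : Poly F) = g1 b := rfl
  rw [hgen]
  intro f hf hf0
  obtain ⟨c, hc, rfl⟩ := mem_span_gen hf hf0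
  constructor
  · have : c • g1 b = NF 0 0 0 c (c*b) c := by
      rw [g1_nf, smul_NF]; exact NF_eq (by ring) (by ring) (by ring) (by ring) (by ring) (by ring)
    rw [this]; exact isSingular_NF _ _ _
  · exact noLinFac hirr hc

lemma realPair_hasLinFac {L : Submodule F (Poly F)} (h : IsRealPair L) :
    ∀ f ∈ L, f ≠ 0 → HasLinearFactor f := by
  intro f hf hf0
  obtain ⟨ℓ, m, h1, h2, h3, h4⟩ := h f hf hf0
  refine ⟨ℓ, h1, fun h0 => hf0 (by rw [h4, h0, zero_mul]), ⟨m, h4⟩⟩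

lemma not_isRealPair_g1_irr {b : F} (hirr : ∀ t : F, t * t + b * t + 1 ≠ 0) :
    ¬ IsRealPair (Submodule.span F {A1 + C b * PInf}) := by
  have hgen : (A1 + C b * PInf : Poly F) = g1 b := rfl
  rw [hgen]
  intro h
  have := realPair_hasLinFac h (g1 b) (Submodule.subset_span rfl) (g1_ne_zero b)
  rw [show (g1 b : Poly F) = (1:F) • g1 b by rw [one_smul]] at this
  exact noLinFac hirr one_ne_zero this

-- ### D4 squares are not real pairs

lemma lin_eq {x y z x' y' z' : F} (h1 : x = x') (h2 : y = y') (h3 : z = z') :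
    lin x y z = (lin x' y' z' : Poly F) := by rw [h1, h2, h3]

lemma indep_contradiction {ℓ m : Poly F} (hind : LinearIndependent F ![ℓ, m]) (d : F)
    (hm : m = d • ℓ) : False := by
  have hsum : d • ℓ + (1:F) • m = 0 := by
    rw [one_smul, hm, ← two_smul F, two_zero, zero_smul]
  exact one_ne_zero ((LinearIndependent.pair_iff.mp hind d 1 hsum).2)

lemma not_isRealPair_sq1 : ¬ IsRealPair (Submodule.span F {A1 + C (0:F) * PInf}) := by
  have hgen : (A1 + C (0:F) * PInf : Poly F) = g1 0 := rfl
  rw [hgen]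
  intro hRP
  obtain ⟨ℓ, m, hℓ, hm, hind, heq⟩ := hRP (g1 0) (Submodule.subset_span rfl) (g1_ne_zero 0)
  have hrepl := linear_rep ℓ hℓ
  have hrepm := linear_rep m hm
  set a0 := coeff (Finsupp.single 0 1) ℓ
  set a1 := coeff (Finsupp.single 1 1) ℓ
  set a2 := coeff (Finsupp.single 2 1) ℓ
  set b0 := coeff (Finsupp.single 0 1) m
  set b1 := coeff (Finsupp.single 1 1) m
  set b2 := coeff (Finsupp.single 2 1) m
  have heq' : (NF (a0*b0) (a0*b1+a1*b0) (a0*b2+a2*b0) (a1*b1) (a1*b2+a2*b1) (a2*b2) : Poly F)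
      = NF 0 0 0 1 0 1 := by rw [← mul_lin, ← hrepl, ← hrepm, ← heq, g1_nf]
  have e00 : a0 * b0 = 0 := by simpa using congrArg (coeff (E 0 0)) heq'
  have e01 : a0 * b1 + a1 * b0 = 0 := by simpa using congrArg (coeff (E 0 1)) heq'
  have e02 : a0 * b2 + a2 * b0 = 0 := by simpa using congrArg (coeff (E 0 2)) heq'
  have e11 : a1 * b1 = 1 := by simpa using congrArg (coeff (E 1 1)) heq'
  have e12 : a1 * b2 + a2 * b1 = 0 := by simpa using congrArg (coeff (E 1 2)) heq'
  have e22 : a2 * b2 = 1 := by simpa using congrArg (coeff (E 2 2)) heq'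
  have ha1 : a1 ≠ 0 := fun h => one_ne_zero (α := F) (by rw [← e11, h, zero_mul])
  have hb1 : b1 ≠ 0 := fun h => one_ne_zero (α := F) (by rw [← e11, h, mul_zero])
  have ha2 : a2 ≠ 0 := fun h => one_ne_zero (α := F) (by rw [← e22, h, zero_mul])
  have hb2 : b2 ≠ 0 := fun h => one_ne_zero (α := F) (by rw [← e22, h, mul_zero])
  have hab0 : a0 = 0 ∧ b0 = 0 := by
    rcases mul_eq_zero.1 e00 with h | h
    · refine ⟨h, ?_⟩
      rw [h, zero_mul, zero_add] at e01
      exact (mul_eq_zero.1 e01).resolve_left ha1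
    · refine ⟨?_, h⟩
      rw [h, mul_zero, add_zero] at e01
      exact (mul_eq_zero.1 e01).resolve_right hb1
  have hsq : a1 * a1 + a2 * a2 = 0 := by
    linear_combination (a1*a2) * e12 - (a2*a2) * e11 - (a1*a1) * e22
  have h12 : a1 = a2 := by
    have h0 : (a1 + a2) * (a1 + a2) = 0 := by
      linear_combination hsq + (a1*a2) * (two_zero (F := F))
    have := mul_self_eq_zero.1 h0
    linear_combination this - a2 * (two_zero (F := F))
  have hb12 : b1 = b2 := by
    apply mul_left_cancel₀ ha1
    rw [e11, h12, e22]
  refine indep_contradiction hind (b1 / a1) ?_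
  rw [hrepm, hrepl, smul_lin]
  refine lin_eq ?_ ?_ ?_
  · rw [hab0.1, hab0.2, mul_zero]
  · rw [div_mul_cancel₀ _ ha1]
  · rw [← h12, div_mul_cancel₀ _ ha1, hb12]

lemma not_isRealPair_sq2 : ¬ IsRealPair (Submodule.span F {A2 + C (0:F) * PInf}) := by
  have hgen : (A2 + C (0:F) * PInf : Poly F) = g2 0 := rfl
  rw [hgen]
  intro hRP
  obtain ⟨ℓ, m, hℓ, hm, hind, heq⟩ := hRP (g2 0) (Submodule.subset_span rfl) (g2_ne_zero 0)
  have hrepl := linear_rep ℓ hℓ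
  have hrepm := linear_rep m hm
  set a0 := coeff (Finsupp.single 0 1) ℓ
  set a1 := coeff (Finsupp.single 1 1) ℓ
  set a2 := coeff (Finsupp.single 2 1) ℓ
  set b0 := coeff (Finsupp.single 0 1) m
  set b1 := coeff (Finsupp.single 1 1) m
  set b2 := coeff (Finsupp.single 2 1) m
  have heq' : (NF (a0*b0) (a0*b1+a1*b0) (a0*b2+a2*b0) (a1*b1) (a1*b2+a2*b1) (a2*b2) : Poly F)
      = NF 0 0 0 0 0 1 := by rw [← mul_lin, ← hrepl, ← hrepm, ← heq, g2_nf]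
  have e00 : a0 * b0 = 0 := by simpa using congrArg (coeff (E 0 0)) heq'
  have e02 : a0 * b2 + a2 * b0 = 0 := by simpa using congrArg (coeff (E 0 2)) heq'
  have e11 : a1 * b1 = 0 := by simpa using congrArg (coeff (E 1 1)) heq'
  have e12 : a1 * b2 + a2 * b1 = 0 := by simpa using congrArg (coeff (E 1 2)) heq'
  have e22 : a2 * b2 = 1 := by simpa using congrArg (coeff (E 2 2)) heq'
  have ha2 : a2 ≠ 0 := fun h => one_ne_zero (α := F) (by rw [← e22, h, zero_mul])
  have hb2 : b2 ≠ 0 := fun h => one_ne_zero (α := F) (by rw [← e22, h, mul_zero])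
  have hab0 : a0 = 0 ∧ b0 = 0 := by
    rcases mul_eq_zero.1 e00 with h | h
    · refine ⟨h, ?_⟩
      rw [h, zero_mul, zero_add] at e02
      exact (mul_eq_zero.1 e02).resolve_left ha2
    · refine ⟨?_, h⟩
      rw [h, mul_zero, add_zero] at e02
      exact (mul_eq_zero.1 e02).resolve_right hb2
  have hab1 : a1 = 0 ∧ b1 = 0 := by
    rcases mul_eq_zero.1 e11 with h | h
    · refine ⟨h, ?_⟩
      rw [h, zero_mul, zero_add] at e12
      exact (mul_eq_zero.1 e12).resolve_left ha2
    · refine ⟨?_, h⟩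
      rw [h, mul_zero, add_zero] at e12
      exact (mul_eq_zero.1 e12).resolve_right hb2
  refine indep_contradiction hind (b2 / a2) ?_
  rw [hrepm, hrepl, smul_lin]
  refine lin_eq ?_ ?_ ?_
  · rw [hab0.1, hab0.2, mul_zero]
  · rw [hab1.1, hab1.2, mul_zero]
  · rw [div_mul_cancel₀ _ ha2]

-- ### E1 counting reducible/irreducible parameters

lemma mul_self_inj {x y : F} (h : x * x = y * y) : x = y := by
  have h0 : (x + y) * (x + y) = 0 := by
    linear_combination h + (x * y + y * y) * (two_zero (F := F))
  have := mul_self_eq_zero.1 h0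
  linear_combination this - y * (two_zero (F := F))

def Red (b : F) : Prop := ∃ t : F, t * t + b * t + 1 = 0

lemma red_zero' : Red (0 : F) := ⟨1, red_zero⟩

/-- the Artin-Schreier additive map `s ↦ s² + s`. -/
def asMap : F →+ F where
  toFun s := s * s + s
  map_zero' := by ring
  map_add' a b := by linear_combination (a * b) * (two_zero (F := F))

lemma ker_asMap : ((asMap.ker : AddSubgroup F) : Set F) = {0, 1} := by
  ext s
  simp only [SetLike.mem_coe, AddMonoidHom.mem_ker, Set.mem_insert_iff, Set.mem_singleton_iff]
  constructor
  · intro h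
    have : s * (s + 1) = 0 := by unfold asMap at h; simp at h; linear_combination h
    rcases mul_eq_zero.1 this with h | h
    · exact Or.inl h
    · refine Or.inr ?_; linear_combination h - (two_zero (F := F))
  · rintro (rfl | rfl) <;> (unfold asMap; simp) 
    linear_combination (two_zero (F := F))

section Count
variable [Fintype F]

lemma card_ker_asMap : Nat.card (asMap.ker : AddSubgroup F) = 2 := by
  have : Nat.card (asMap.ker : AddSubgroup F) = ({0, 1} : Set F).ncard := by
    rw [Set.ncard, ← ker_asMap]; rfl
  rw [this, Set.ncard_pair (zero_ne_one (α := F))]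

set_option maxHeartbeats 1000000 in
lemma card_F_eq : Fintype.card F = 2 * Nat.card (asMap.range : AddSubgroup F) := by
  have h1 := AddSubgroup.card_eq_card_quotient_mul_card_addSubgroup
    (AddMonoidHom.ker (asMap (F := F)))
  have h2 := Nat.card_congr (QuotientAddGroup.quotientKerEquivRange (asMap (F := F))).toEquiv
  rw [h2, card_ker_asMap] at h1
  rw [← Nat.card_eq_fintype_card, h1, mul_comm]

noncomputable def sqrtF (c : F) : F := Classical.choose (exists_sqrt c)

lemma sqrtF_spec (c : F) : sqrtF c * sqrtF c = c := Classical.choose_spec (exists_sqrt c)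

lemma red_iff {b : F} (hb : b ≠ 0) : Red b ↔ b⁻¹ * b⁻¹ ∈ asMap.range := by
  constructor
  · rintro ⟨t, ht⟩
    refine ⟨t * b⁻¹, ?_⟩
    show (t * b⁻¹) * (t * b⁻¹) + t * b⁻¹ = b⁻¹ * b⁻¹
    have hbb : b * b⁻¹ = 1 := mul_inv_cancel₀ hb
    linear_combination (b⁻¹*b⁻¹) * ht + (-(b⁻¹*t)) * hbb + (-(b⁻¹*b⁻¹)) * (two_zero (F := F))
  · rintro ⟨s, hs⟩
    have hs' : s * s + s = b⁻¹ * b⁻¹ := hs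
    refine ⟨b * s, ?_⟩
    have hbb : b * b⁻¹ = 1 := mul_inv_cancel₀ hb
    linear_combination (b*b) * hs' + (b*b⁻¹ + 1) * hbb + (two_zero (F := F))

lemma card_range_pos : 1 ≤ Nat.card (asMap.range : AddSubgroup F) :=
  Nat.one_le_iff_ne_zero.2 (Nat.card_ne_zero.2 ⟨⟨0, AddSubgroup.zero_mem _⟩, inferInstance⟩)

noncomputable def redEquiv : {b : F // b ≠ 0 ∧ Red b} ≃
    {c : F // c ∈ (asMap.range : AddSubgroup F) ∧ c ≠ 0} where
  toFun x := ⟨x.1⁻¹ * x.1⁻¹, (red_iff x.2.1).1 x.2.2,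
    mul_ne_zero (inv_ne_zero x.2.1) (inv_ne_zero x.2.1)⟩
  invFun c := ⟨(sqrtF c.1)⁻¹, by
    have hs0 : sqrtF c.1 ≠ 0 := fun h => c.2.2 (by rw [← sqrtF_spec c.1, h, zero_mul])
    refine ⟨inv_ne_zero hs0, ?_⟩
    rw [red_iff (inv_ne_zero hs0), inv_inv, sqrtF_spec]
    exact c.2.1⟩
  left_inv x := by
    have : sqrtF (x.1⁻¹ * x.1⁻¹) = x.1⁻¹ := mul_self_inj (by rw [sqrtF_spec])
    exact Subtype.ext (by simp only [this, inv_inv])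
  right_inv c := by
    exact Subtype.ext (by simp only [inv_inv, sqrtF_spec])

lemma disjoint_pred {α : Type*} {p q : α → Prop} (h : ∀ a, p a → q a → False) :
    Disjoint p q := by
  intro r hr1 hr2 a ha
  exact absurd (hr2 a ha) (fun hq => h a (hr1 a ha) hq)

lemma card_or {α : Type*} [Finite α] (p q : α → Prop) (h : ∀ a, p a → q a → False) :
    Nat.card {x // p x ∨ q x} = Nat.card {x // p x} + Nat.card {x // q x} := by
  classical
  rw [Nat.card_congr (subtypeOrEquiv p q (disjoint_pred h)), Nat.card_sum]

lemma card_eq_singleton {α : Type*} [Finite α] (a : α) (p : α → Prop) (hp : ∀ x, p x ↔ x = a)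
    (ha : p a) : Nat.card {x // p x} = 1 := by
  haveI : Unique {x // p x} := ⟨⟨⟨a, ha⟩⟩, fun x => Subtype.ext ((hp x.1).1 x.2)⟩
  exact Nat.card_unique

lemma card_range_split : Nat.card (asMap.range : AddSubgroup F) =
    1 + Nat.card {c : F // c ∈ (asMap.range : AddSubgroup F) ∧ c ≠ 0} := by
  have h1 : Nat.card (asMap.range : AddSubgroup F) =
      Nat.card {c : F // c ∈ (asMap.range : AddSubgroup F)} := rfl
  rw [h1]
  have h2 : ∀ c : F, c ∈ (asMap.range : AddSubgroup F) ↔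
      ((c ∈ (asMap.range : AddSubgroup F) ∧ c = 0) ∨
        (c ∈ (asMap.range : AddSubgroup F) ∧ c ≠ 0)) := by
    intro c; by_cases h : c = 0 <;> tauto
  rw [Nat.card_congr (Equiv.subtypeEquivRight h2), card_or _ _ (fun a h1 h2 => h2.2 h1.2)]
  congr 1
  refine card_eq_singleton 0 _ (fun x => ⟨fun h => h.2, ?_⟩) ⟨⟨0, map_zero _⟩, rfl⟩
  rintro rfl; exact ⟨⟨0, map_zero _⟩, rfl⟩

lemma card_red_ne : Nat.card {b : F // b ≠ 0 ∧ Red b} =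
    Nat.card (asMap.range : AddSubgroup F) - 1 := by
  rw [Nat.card_congr redEquiv, card_range_split]
  omega

lemma card_red : Nat.card {b : F // Red b} = Nat.card (asMap.range : AddSubgroup F) := by
  have h2 : ∀ b : F, Red b ↔ (b = 0 ∨ (b ≠ 0 ∧ Red b)) := by
    intro b
    by_cases h : b = 0
    · subst h; simp [red_zero']
    · tauto
  rw [Nat.card_congr (Equiv.subtypeEquivRight h2),
    card_or _ _ (fun a h1 h2 => h2.1 h1), card_red_ne,
    card_eq_singleton (0:F) _ (fun x => Iff.rfl) rfl]
  have := card_range_pos (F := F)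
  omega

lemma card_irr : Nat.card {b : F // ¬ Red b} = Fintype.card F / 2 := by
  classical
  have htot : Nat.card {b : F // Red b} + Nat.card {b : F // ¬ Red b} = Fintype.card F := by
    rw [← Nat.card_sum, Nat.card_congr (Equiv.sumCompl Red), Nat.card_eq_fintype_card]
  have h1 := card_red (F := F)
  have h2 := card_F_eq (F := F)
  omega

lemma card_red_ne' : Nat.card {b : F // b ≠ 0 ∧ Red b} = Fintype.card F / 2 - 1 := by
  have h2 := card_F_eq (F := F)
  have := card_red_ne (F := F)
  omega

lemma exists_irr : ∃ b : F, ¬ Red b := by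
  have h := card_irr (F := F)
  have h2 := card_F_eq (F := F)
  have h3 := card_range_pos (F := F)
  have : Nat.card {b : F // ¬ Red b} ≠ 0 := by omega
  obtain ⟨⟨b, hb⟩⟩ := Nat.card_ne_zero.1 this |>.1
  exact ⟨b, hb⟩

end Count

-- ### E2 classification of members and counts

lemma A1_nf : (A1 : Poly F) = NF 0 0 0 1 0 1 := by
  simp only [A1, NF, map_zero, map_one]; ring
lemma A2_nf : (A2 : Poly F) = NF 0 0 0 0 0 1 := by
  simp only [A2, NF, map_zero, map_one]; ring

lemma coeff_g1_12 (b : F) : coeff (E 1 2) (A1 + C b * PInf : Poly F) = b := by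
  rw [show (A1 + C b * PInf : Poly F) = g1 b from rfl, g1_nf]; simp
lemma coeff_g2_12 (b : F) : coeff (E 1 2) (A2 + C b * PInf : Poly F) = b := by
  rw [show (A2 + C b * PInf : Poly F) = g2 b from rfl, g2_nf]; simp

lemma not_some_eq_none {α : Type*} {b : α} : ¬ (some b = none) := by simp

section Class
variable [Fintype F]

lemma class_DL1 (x : Option F) : IsDoubleLine (mem' A1 x) ↔ x = some 0 := by
  cases x with
  | none =>
    refine iff_of_false ?_ (by simp)
    exact not_isDoubleLine (by rw [coeff_PInf_12]; exact one_ne_zero)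
  | some b =>
    constructor
    · intro h
      suffices hb : b = 0 by rw [hb]
      by_contra hb
      exact not_isDoubleLine (g := A1 + C b * PInf) (by rw [coeff_g1_12]; exact hb) h
    · intro h
      rw [Option.some_inj.1 h]
      exact isDoubleLine_g1_0

lemma class_RP1 (x : Option F) :
    IsRealPair (mem' A1 x) ↔ (x = none ∨ ∃ b, x = some b ∧ (b ≠ 0 ∧ Red b)) := by
  cases x with
  | none => exact iff_of_true isRealPair_PInf (Or.inl rfl)
  | some b =>
    constructor
    · intro h
      by_cases hb : b = 0
      · subst hb; exact absurd h not_isRealPair_sq1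
      · by_cases hr : Red b
        · exact Or.inr ⟨b, rfl, hb, hr⟩
        · exact absurd h (not_isRealPair_g1_irr (fun t ht => hr ⟨t, ht⟩))
    · rintro (h | ⟨b', hb', hne, t, ht⟩)
      · exact absurd h not_some_eq_none
      · obtain rfl := Option.some_inj.1 hb'
        exact isRealPair_g1 hne ht

lemma class_IP1 (x : Option F) :
    IsImagPair (mem' A1 x) ↔ ∃ b, x = some b ∧ ¬ Red b := by
  cases x with
  | none =>
    refine iff_of_false (not_isImagPair PInf_ne_zero hasLinFac_PInf) ?_
    rintro ⟨b, h, -⟩; cases h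
  | some b =>
    constructor
    · intro h
      refine ⟨b, rfl, fun hr => ?_⟩
      obtain ⟨t, ht⟩ := hr
      exact not_isImagPair (g1_ne_zero b) (hasLinFac_g1 ht) h
    · rintro ⟨b', hb', hirr⟩
      obtain rfl := Option.some_inj.1 hb'
      exact isImagPair_g1 (fun t ht => hirr ⟨t, ht⟩)

lemma class_NS1 (x : Option F) : ¬ IsNonsingularConic (mem' A1 x) := by
  cases x with
  | none => exact not_isNonsingular PInf_ne_zero (by rw [PInf_nf]; exact isSingular_NF _ _ _)
  | some b =>
    exact not_isNonsingular (g1_ne_zero b)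
      (by rw [show (A1 + C b * PInf : Poly F) = g1 b from rfl, g1_nf]; exact isSingular_NF _ _ _)

lemma class_DL2 (x : Option F) : IsDoubleLine (mem' A2 x) ↔ x = some 0 := by
  cases x with
  | none =>
    refine iff_of_false ?_ (by simp)
    exact not_isDoubleLine (by rw [coeff_PInf_12]; exact one_ne_zero)
  | some b =>
    constructor
    · intro h
      suffices hb : b = 0 by rw [hb]
      by_contra hb
      exact not_isDoubleLine (g := A2 + C b * PInf) (by rw [coeff_g2_12]; exact hb) h
    · intro h
      rw [Option.some_inj.1 h]
      exact isDoubleLine_g2_0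

lemma class_RP2 (x : Option F) :
    IsRealPair (mem' A2 x) ↔ (x = none ∨ ∃ b, x = some b ∧ b ≠ 0) := by
  cases x with
  | none => exact iff_of_true isRealPair_PInf (Or.inl rfl)
  | some b =>
    constructor
    · intro h
      by_cases hb : b = 0
      · subst hb; exact absurd h not_isRealPair_sq2
      · exact Or.inr ⟨b, rfl, hb⟩
    · rintro (h | ⟨b', hb', hne⟩)
      · exact absurd h not_some_eq_none
      · obtain rfl := Option.some_inj.1 hb'
        exact isRealPair_g2 hne

lemma class_IP2 (x : Option F) : ¬ IsImagPair (mem' A2 x) := by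
  cases x with
  | none => exact not_isImagPair PInf_ne_zero hasLinFac_PInf
  | some b => exact not_isImagPair (g2_ne_zero b) (hasLinFac_g2 b)

lemma class_NS2 (x : Option F) : ¬ IsNonsingularConic (mem' A2 x) := by
  cases x with
  | none => exact not_isNonsingular PInf_ne_zero (by rw [PInf_nf]; exact isSingular_NF _ _ _)
  | some b =>
    exact not_isNonsingular (g2_ne_zero b)
      (by rw [show (A2 + C b * PInf : Poly F) = g2 b from rfl, g2_nf]; exact isSingular_NF _ _ _)

end Class

-- ### E3 cardinality transfer

lemma card_members {W : Submodule F (Poly F)} {m : Option F → Submodule F (Poly F)}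
    (hm : ∀ L, IsMember W L ↔ ∃ x, L = m x) (hinj : Function.Injective m)
    (Φ : Submodule F (Poly F) → Prop) :
    Nat.card {L : Submodule F (Poly F) // IsMember W L ∧ Φ L} =
      Nat.card {x : Option F // Φ (m x)} := by
  refine Nat.card_congr (Equiv.symm (Equiv.ofBijective
    (fun x => ⟨m x.1, (hm _).2 ⟨x.1, rfl⟩, x.2⟩) ⟨?_, ?_⟩))
  · intro x y h
    exact Subtype.ext (hinj (congrArg Subtype.val h))
  · rintro ⟨L, hL, hΦ⟩
    obtain ⟨x, rfl⟩ := (hm L).1 hL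
    exact ⟨⟨x, hΦ⟩, rfl⟩

noncomputable def optSome {α : Type*} (P : α → Prop) :
    {x : Option α // ∃ a, x = some a ∧ P a} ≃ {a // P a} where
  toFun x := ⟨Classical.choose x.2, (Classical.choose_spec x.2).2⟩
  invFun a := ⟨some a.1, a.1, rfl, a.2⟩
  left_inv x := Subtype.ext (Classical.choose_spec x.2).1.symm
  right_inv a := Subtype.ext (Option.some_injective _
    ((Classical.choose_spec (⟨a.1, rfl, a.2⟩ : ∃ b, some a.1 = some b ∧ P b)).1).symm)

lemma card_opt_some {α : Type*} [Finite α] (P : α → Prop) :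
    Nat.card {x : Option α // ∃ a, x = some a ∧ P a} = Nat.card {a // P a} :=
  Nat.card_congr (optSome P)

lemma card_opt_or {α : Type*} [Finite α] (P : α → Prop) :
    Nat.card {x : Option α // x = none ∨ ∃ a, x = some a ∧ P a} = 1 + Nat.card {a // P a} := by
  haveI := Fintype.ofFinite α
  rw [card_or (fun x => x = none) _ (by rintro x rfl ⟨a, h, -⟩; exact not_some_eq_none h.symm),
    card_eq_singleton none _ (fun x => Iff.rfl) rfl, card_opt_some]

-- ### F final counts

section Final
variable [Fintype F]

lemma hA1c : coeff (E 1 1) (A1 : Poly F) = 1 := by rw [A1_nf]; simp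
lemma hA1c12 : coeff (E 1 2) (A1 : Poly F) = 0 := by rw [A1_nf]; simp
lemma hP11 : coeff (E 1 1) (PInf : Poly F) = 0 := by rw [PInf_nf]; simp
lemma hA2c : coeff (E 2 2) (A2 : Poly F) = 1 := by rw [A2_nf]; simp
lemma hA2c12 : coeff (E 1 2) (A2 : Poly F) = 0 := by rw [A2_nf]; simp
lemma hP22 : coeff (E 2 2) (PInf : Poly F) = 0 := by rw [PInf_nf]; simp

lemma hm1 (L : Submodule F (Poly F)) :
    IsMember (Submodule.span F {A1, PInf}) L ↔ ∃ x, L = mem' A1 x :=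
  ⟨isMember_param hA1c hP11, by rintro ⟨x, rfl⟩; exact mem'_isMember hA1c hP11 x⟩
lemma hm2 (L : Submodule F (Poly F)) :
    IsMember (Submodule.span F {A2, PInf}) L ↔ ∃ x, L = mem' A2 x :=
  ⟨isMember_param hA2c hP22, by rintro ⟨x, rfl⟩; exact mem'_isMember hA2c hP22 x⟩

lemma a1_W1 : a1 (Submodule.span F {A1, PInf}) = 1 := by
  unfold a1
  rw [card_members hm1 (mem'_injective hA1c hA1c12 hP11),
    Nat.card_congr (Equiv.subtypeEquivRight class_DL1)]
  exact card_eq_singleton (some 0) _ (fun _ => Iff.rfl) rfl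

lemma a2r_W1 : a2r (Submodule.span F {A1, PInf}) = Fintype.card F / 2 := by
  unfold a2r
  rw [card_members hm1 (mem'_injective hA1c hA1c12 hP11),
    Nat.card_congr (Equiv.subtypeEquivRight class_RP1), card_opt_or, card_red_ne]
  have h1 := card_F_eq (F := F)
  have h2 := card_range_pos (F := F)
  omega

lemma a2i_W1 : a2i (Submodule.span F {A1, PInf}) = Fintype.card F / 2 := by
  unfold a2i
  rw [card_members hm1 (mem'_injective hA1c hA1c12 hP11),
    Nat.card_congr (Equiv.subtypeEquivRight class_IP1), card_opt_some, card_irr]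

lemma a3_W1 : a3 (Submodule.span F {A1, PInf}) = 0 := by
  unfold a3
  rw [card_members hm1 (mem'_injective hA1c hA1c12 hP11)]
  haveI : IsEmpty {x : Option F // IsNonsingularConic (mem' A1 x)} :=
    ⟨fun y => class_NS1 y.1 y.2⟩
  exact Nat.card_of_isEmpty

lemma a1_W2 : a1 (Submodule.span F {A2, PInf}) = 1 := by
  unfold a1
  rw [card_members hm2 (mem'_injective hA2c hA2c12 hP22),
    Nat.card_congr (Equiv.subtypeEquivRight class_DL2)]
  exact card_eq_singleton (some 0) _ (fun _ => Iff.rfl) rfl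

lemma card_ne_zero_sub : Nat.card {b : F // b ≠ 0} = Fintype.card F - 1 := by
  classical
  rw [Nat.card_eq_fintype_card]
  calc Fintype.card {b : F // ¬ (b = 0)}
      = Fintype.card F - Fintype.card {b : F // b = 0} := Fintype.card_subtype_compl _
    _ = Fintype.card F - 1 := by rw [Fintype.card_subtype_eq]

lemma a2r_W2 : a2r (Submodule.span F {A2, PInf}) = Fintype.card F := by
  unfold a2r
  rw [card_members hm2 (mem'_injective hA2c hA2c12 hP22),
    Nat.card_congr (Equiv.subtypeEquivRight class_RP2), card_opt_or, card_ne_zero_sub]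
  have : 0 < Fintype.card F := Fintype.card_pos
  omega

lemma a2i_W2 : a2i (Submodule.span F {A2, PInf}) = 0 := by
  unfold a2i
  rw [card_members hm2 (mem'_injective hA2c hA2c12 hP22)]
  haveI : IsEmpty {x : Option F // IsImagPair (mem' A2 x)} :=
    ⟨fun y => class_IP2 y.1 y.2⟩
  exact Nat.card_of_isEmpty

lemma a3_W2 : a3 (Submodule.span F {A2, PInf}) = 0 := by
  unfold a3
  rw [card_members hm2 (mem'_injective hA2c hA2c12 hP22)]
  haveI : IsEmpty {x : Option F // IsNonsingularConic (mem' A2 x)} :=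
    ⟨fun y => class_NS2 y.1 y.2⟩
  exact Nat.card_of_isEmpty

end Final

-- ### G the action

def subst (M : Matrix (Fin 3) (Fin 3) F) : Fin 3 → Poly F := fun i => ∑ j, C (M i j) * X j

lemma act_eq_bind (M : Matrix (Fin 3) (Fin 3) F) (f : Poly F) :
    act M f = bind₁ (subst M) f := rfl

lemma act_act (M N : Matrix (Fin 3) (Fin 3) F) (f : Poly F) :
    act M (act N f) = act (N * M) f := by
  rw [act_eq_bind, act_eq_bind, act_eq_bind, bind₁_bind₁]
  have hfun : (fun i => bind₁ (subst M) (subst N i)) = subst (N * M) := by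
    funext i
    show bind₁ (subst M) (∑ j, C (N i j) * X j) = ∑ k, C ((N * M) i k) * X k
    rw [map_sum]
    simp only [map_mul, bind₁_C_right, bind₁_X_right]
    simp only [subst, Finset.mul_sum]
    rw [Finset.sum_comm]
    refine Finset.sum_congr rfl fun k _ => ?_
    rw [Matrix.mul_apply, map_sum, Finset.sum_mul]
    refine Finset.sum_congr rfl fun j _ => ?_
    rw [map_mul, mul_assoc]
  rw [hfun]

lemma act_one (f : Poly F) : act (1 : Matrix (Fin 3) (Fin 3) F) f = f := by
  rw [act_eq_bind]
  have hs : subst (1 : Matrix (Fin 3) (Fin 3) F) = X := by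
    funext i
    simp [subst, Matrix.one_apply, apply_ite (C : F → Poly F)]
  rw [hs, bind₁_X_left]
  rfl

lemma act_mul (M : Matrix (Fin 3) (Fin 3) F) (p q : Poly F) :
    act M (p * q) = act M p * act M q := by
  rw [act_eq_bind, act_eq_bind, act_eq_bind]; exact map_mul _ _ _

lemma act_X2 (M : Matrix (Fin 3) (Fin 3) F) : act M (X 2) = subst M 2 := by
  rw [act_eq_bind]; exact bind₁_X_right _ _

lemma subst_homog (M : Matrix (Fin 3) (Fin 3) F) (i : Fin 3) :
    (subst M i).IsHomogeneous 1 :=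
  IsHomogeneous.sum _ _ _ (fun j _ => isHomogeneous_C_mul_X _ _)

def dvdX2 : Submodule F (Poly F) where
  carrier := {p | X 2 ∣ p}
  zero_mem' := dvd_zero _
  add_mem' := fun h1 h2 => dvd_add h1 h2
  smul_mem' := fun c p hp => by
    rw [smul_eq_C_mul]; exact Dvd.dvd.mul_left hp _

lemma W2_dvd : Submodule.span F {A2, PInf} ≤ (dvdX2 : Submodule F (Poly F)) := by
  rw [Submodule.span_le]
  rintro p (rfl | rfl)
  · exact ⟨X 2, by rw [A2]; ring⟩
  · exact ⟨X 1, by rw [PInf]; ring⟩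

lemma not_equiv [Fintype F] : ¬ ∃ g : (Matrix (Fin 3) (Fin 3) F)ˣ,
    Submodule.map (act g.val) (Submodule.span F {A1, PInf}) = Submodule.span F {A2, PInf} := by
  rintro ⟨g, hmap⟩
  obtain ⟨b0, hb0⟩ := exists_irr (F := F)
  have hirr : ∀ t : F, t * t + b0 * t + 1 ≠ 0 := fun t ht => hb0 ⟨t, ht⟩
  have hf₀ : (g1 b0 : Poly F) ∈ Submodule.span F {A1, PInf} :=
    Submodule.mem_span_pair.2 ⟨1, b0, by rw [one_smul, smul_eq_C_mul]; rfl⟩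
  have hmem : act g.val (g1 b0) ∈ Submodule.span F {A2, PInf} :=
    hmap ▸ Submodule.mem_map_of_mem hf₀
  obtain ⟨k, hk⟩ := W2_dvd hmem
  set Minv := ((g⁻¹ : (Matrix (Fin 3) (Fin 3) F)ˣ) : Matrix (Fin 3) (Fin 3) F) with hMinv
  have hprod : g.val * Minv = 1 := by
    rw [hMinv, ← Units.val_mul, mul_inv_cancel, Units.val_one]
  have hprod' : Minv * g.val = 1 := by
    rw [hMinv, ← Units.val_mul, inv_mul_cancel, Units.val_one]
  have hginv : act Minv (act g.val (g1 b0)) = g1 b0 := by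
    rw [act_act, hprod, act_one]
  have hl : act Minv (X 2) * act Minv k = g1 b0 := by
    rw [← act_mul, ← hk, hginv]
  have hℓ0 : act Minv (X 2) ≠ 0 := by
    intro h0
    have : act g.val (act Minv (X 2)) = X 2 := by rw [act_act, hprod', act_one]
    rw [h0] at this
    have h00 : act g.val (0 : Poly F) = 0 := map_zero _
    rw [h00] at this
    exact X_ne_zero 2 this.symm
  have hfac : HasLinearFactor (g1 b0 : Poly F) :=
    ⟨act Minv (X 2), act_X2 Minv ▸ subst_homog Minv 2, hℓ0, ⟨act Minv k, hl.symm⟩⟩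
  have := noLinFac hirr (c := 1) one_ne_zero
  rw [one_smul] at this
  exact this hfac

end Char2
end AUX

/-- the pencils `W1 = ⟨(X1+X2)², X1·X2⟩` and `W2 = ⟨X2², X1·X2⟩` have
hyperplane-orbit distributions `(1, q/2, q/2, 0)` and `(1, q, 0, 0)` respectively;
in particular they are not `GL(3,F)`-equivalent. -/
theorem omega1_omega2_distinct (F : Type*) [Field F] [Fintype F] [CharP F 2] :
    let W1 : Submodule F (Poly F) := Submodule.span F {(X 1 + X 2) ^ 2, X 1 * X 2}
    let W2 : Submodule F (Poly F) := Submodule.span F {X 2 ^ 2, X 1 * X 2}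
    (a1 W1, a2r W1, a2i W1, a3 W1) = (1, Fintype.card F / 2, Fintype.card F / 2, 0) ∧
    (a1 W2, a2r W2, a2i W2, a3 W2) = (1, Fintype.card F, 0, 0) ∧
    ¬ ∃ g : (Matrix (Fin 3) (Fin 3) F)ˣ, Submodule.map (act g.val) W1 = W2 := by
  intro W1 W2
  have hset1 : ({(X 1 + X 2) ^ 2, X 1 * X 2} : Set (Poly F)) = {A1, PInf} := by
    rw [sq_expand]; rfl
  have hW1 : W1 = Submodule.span F {A1, PInf} := by
    show Submodule.span F {(X 1 + X 2) ^ 2, X 1 * X 2} = _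
    rw [hset1]
  have hW2 : W2 = Submodule.span F {A2, PInf} := rfl
  refine ⟨?_, ?_, ?_⟩
  · rw [hW1, a1_W1, a2r_W1, a2i_W1, a3_W1]
  · rw [hW2, a1_W2, a2r_W2, a2i_W2, a3_W2]
  · rw [hW1, hW2]
    exact not_equiv

end Pencils
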